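/- Let p be a prime and r a natural number. Then every closed subgroup H of the general linear group GL_r(ℤ_p) over the p-adic integers is topologically finitely generated: there is a finite subset of H whose generated subgroup is dense in H. -/

import Mathlib

namespace Stmt12Aux

variable {p : ℕ} [Fact p.Prime] {r : ℕ}

local notation "Mat" => Matrix (Fin r) (Fin r) ℤ_[p]
local notation "GL" => Matrix.GeneralLinearGroup (Fin r) ℤ_[p]

/-- every entry divisible by `p^n` -/
def Dv (n : ℕ) (a : Mat) : Prop := ∀ i j, (p:ℤ_[p])^n ∣ a i j

lemma pp_ne_zero : (p : ℤ_[p]) ≠ 0 := by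
  exact_mod_cast Nat.cast_ne_zero.mpr (Fact.out : p.Prime).ne_zero

lemma Dv.add {n} {a b : Mat} (ha : Dv n a) (hb : Dv n b) : Dv n (a + b) :=
  fun i j => by simpa [Matrix.add_apply] using dvd_add (ha i j) (hb i j)

lemma Dv.neg {n} {a : Mat} (ha : Dv n a) : Dv n (-a) :=
  fun i j => by simpa using (ha i j).neg_right

lemma Dv.mul_left {n} {a : Mat} (ha : Dv n a) (b : Mat) : Dv n (b * a) := by
  intro i j
  rw [Matrix.mul_apply]
  exact Finset.dvd_sum fun k _ => Dvd.dvd.mul_left (ha k j) _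

lemma Dv.mul_right {n} {a : Mat} (ha : Dv n a) (b : Mat) : Dv n (a * b) := by
  intro i j
  rw [Matrix.mul_apply]
  exact Finset.dvd_sum fun k _ => Dvd.dvd.mul_right (ha i k) _

lemma Dv.mono {n m} (h : m ≤ n) {a : Mat} (ha : Dv n a) : Dv m a :=
  fun i j => dvd_trans (pow_dvd_pow _ h) (ha i j)

/-- the congruence subgroup of level `n` -/
def K (n : ℕ) : Subgroup GL where
  carrier := {g | Dv n ((g : Mat) - 1)}
  one_mem' := by simp [Dv]
  mul_mem' := by
    intro a b ha hb
    have : ((a*b : GL) : Mat) - 1 = ((a:Mat) - 1) * ((b:Mat) - 1) + (((a:Mat) - 1) + ((b:Mat) - 1)) := by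
      push_cast
      noncomm_ring
    rw [Set.mem_setOf_eq, this]
    exact ((hb.mul_left _).add (ha.add hb))
  inv_mem' := by
    intro a ha
    have : ((a⁻¹ : GL) : Mat) - 1 = (a⁻¹ : GL) * (1 - (a : Mat)) := by
      have h1 : ((a⁻¹ : GL) : Mat) * (a : Mat) = 1 := by
        exact a.inv_mul
      rw [mul_sub, mul_one, h1]
    rw [Set.mem_setOf_eq, this]
    simpa using (Dv.mul_left (by simpa using ha.neg) _)

lemma mem_K_iff {n : ℕ} {g : GL} : g ∈ K (p := p) (r := r) n ↔ Dv n ((g : Mat) - 1) := Iff.rfl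

open scoped Classical

lemma pp_ne_zero' : (p : ℤ_[p]) ≠ 0 := by
  exact_mod_cast Nat.cast_ne_zero.mpr (Fact.out : p.Prime).ne_zero

/-- division by `p^n` (junk value otherwise) -/
noncomputable def pdiv (n : ℕ) (x : ℤ_[p]) : ℤ_[p] :=
  if h : (p:ℤ_[p])^n ∣ x then h.choose else 0

lemma pdiv_spec {n : ℕ} {x : ℤ_[p]} (h : (p:ℤ_[p])^n ∣ x) : (p:ℤ_[p])^n * pdiv n x = x := by
  rw [pdiv, dif_pos h]
  exact h.choose_spec.symm

lemma pdiv_unique {n : ℕ} {x y : ℤ_[p]} (h : x = (p:ℤ_[p])^n * y) : pdiv n x = y := by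
  have hd : (p:ℤ_[p])^n ∣ x := ⟨y, h⟩
  apply mul_left_cancel₀ (pow_ne_zero n pp_ne_zero')
  rw [pdiv_spec hd, h]

/-- the "leading coefficient mod p" map at level `n` -/
noncomputable def theta (n : ℕ) (g : GL) : Matrix (Fin r) (Fin r) (ZMod p) :=
  Matrix.of fun i j => PadicInt.toZMod (pdiv n (((g : Mat) - 1) i j))

/-- canonical matrix `A` with `g - 1 = p^n • A` -/
noncomputable def lead (n : ℕ) (g : GL) : Mat :=
  Matrix.of fun i j => pdiv n (((g : Mat) - 1) i j)

lemma lead_spec {n : ℕ} {g : GL} (hg : Dv n ((g : Mat) - 1)) :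
    (g : Mat) - 1 = (p:ℤ_[p])^n • lead n g := by
  ext i j
  simp only [Matrix.smul_apply, lead, Matrix.of_apply, smul_eq_mul]
  exact (pdiv_spec (hg i j)).symm

lemma theta_eq_map_lead (n : ℕ) (g : GL) :
    theta n g = (lead n g).map (PadicInt.toZMod) := by
  ext i j; rfl

lemma theta_eq_of {n : ℕ} {g : GL} {B : Mat} (h : (g : Mat) - 1 = (p:ℤ_[p])^n • B) :
    theta n g = B.map (PadicInt.toZMod) := by
  ext i j
  simp only [theta, Matrix.of_apply, Matrix.map_apply]
  congr 1
  apply pdiv_unique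
  have := congrFun (congrFun h i) j
  simpa [Matrix.smul_apply, smul_eq_mul] using this

lemma theta_one (n : ℕ) : theta (p := p) (r := r) n 1 = 0 := by
  have : ((1 : GL) : Mat) - 1 = (p:ℤ_[p])^n • (0 : Mat) := by simp
  rw [theta_eq_of this]
  ext i j; simp

lemma theta_mul {n : ℕ} (hn : 1 ≤ n) {g h : GL}
    (hg : g ∈ K (p := p) (r := r) n) (hh : h ∈ K (p := p) (r := r) n) :
    theta n (g * h) = theta n g + theta n h := by
  have hA := lead_spec (mem_K_iff.mp hg)
  have hB := lead_spec (mem_K_iff.mp hh)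
  set A := lead n g
  set B := lead n h
  have key : ((g * h : GL) : Mat) - 1 = (p:ℤ_[p])^n • (A + B + (p:ℤ_[p])^n • (A * B)) := by
    have hgm : (g : Mat) = 1 + (p:ℤ_[p])^n • A := by rw [← hA]; abel
    have hhm : (h : Mat) = 1 + (p:ℤ_[p])^n • B := by rw [← hB]; abel
    have : ((g * h : GL) : Mat) = (g : Mat) * (h : Mat) := rfl
    rw [this, hgm, hhm]
    simp only [smul_add, mul_add, add_mul, one_mul, mul_one, smul_smul, Algebra.mul_smul_comm,
      Algebra.smul_mul_assoc]
    ring_nf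
    abel
  rw [theta_eq_of key, theta_eq_map_lead, theta_eq_map_lead]
  ext i j
  simp only [Matrix.map_apply, Matrix.add_apply, Matrix.smul_apply, smul_eq_mul,
    map_add, map_mul, map_pow, Matrix.add_apply]
  have hp0 : (PadicInt.toZMod ((p : ℤ_[p]))) = 0 := by
    rw [← RingHom.mem_ker, PadicInt.ker_toZMod, PadicInt.maximalIdeal_eq_span_p,
      Ideal.mem_span_singleton]
  rw [hp0]
  rw [zero_pow (by omega)]
  ring

lemma theta_inv {n : ℕ} (hn : 1 ≤ n) {g : GL} (hg : g ∈ K (r := r) n) :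
    theta n g⁻¹ = - theta n g := by
  have h1 : g⁻¹ ∈ K (r := r) n := (K n).inv_mem hg
  have := theta_mul hn h1 hg
  rw [inv_mul_cancel, theta_one] at this
  exact eq_neg_of_add_eq_zero_left this.symm

lemma theta_eq_zero_iff {n : ℕ} {g : GL} (hg : g ∈ K (r := r) n) :
    theta n g = 0 ↔ g ∈ K (r := r) (n + 1) := by
  have hA := lead_spec (hg)
  constructor
  · intro h0
    rw [theta_eq_map_lead] at h0
    intro i j
    have : PadicInt.toZMod (lead n g i j) = 0 := by
      have := congrFun (congrFun h0 i) j
      simpa using this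
    rw [← RingHom.mem_ker, PadicInt.ker_toZMod, PadicInt.maximalIdeal_eq_span_p,
      Ideal.mem_span_singleton] at this
    obtain ⟨c, hc⟩ := this
    have he : ((g : Mat) - 1) i j = (p:ℤ_[p])^n * lead n g i j := by
      have := congrFun (congrFun hA i) j
      simpa [smul_eq_mul] using this
    rw [he, hc, pow_succ]
    exact ⟨c, by ring⟩
  · intro hg1
    have hB := lead_spec (mem_K_iff.mp hg1)
    have : (g : Mat) - 1 = (p:ℤ_[p])^n • ((p:ℤ_[p]) • lead (n+1) g) := by
      rw [hB, smul_smul, ← pow_succ]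
    rw [theta_eq_of this]
    ext i j
    simp only [Matrix.map_apply, Matrix.smul_apply, smul_eq_mul, map_mul, Matrix.zero_apply]
    have hp0 : (PadicInt.toZMod ((p : ℤ_[p]))) = 0 := by
      rw [← RingHom.mem_ker, PadicInt.ker_toZMod, PadicInt.maximalIdeal_eq_span_p,
        Ideal.mem_span_singleton]
    rw [hp0, zero_mul]

lemma Dv.mul {s t : ℕ} {a b : Mat} (ha : Dv s a) (hb : Dv t b) : Dv (s + t) (a * b) := by
  intro i j
  rw [Matrix.mul_apply]
  refine Finset.dvd_sum fun k _ => ?_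
  rw [pow_add]
  exact mul_dvd_mul (ha i k) (hb k j)

lemma Dv.pow {s : ℕ} {a : Mat} (ha : Dv s a) (m : ℕ) : Dv (s * m) (a ^ m) := by
  induction m with
  | zero => intro i j; simp
  | succ m ih =>
      have := ih.mul ha
      rw [pow_succ]
      rw [show s * (m+1) = s * m + s by ring]
      exact this

lemma Dv.sum {n : ℕ} {ι : Type*} {t : Finset ι} {f : ι → Mat} (h : ∀ i ∈ t, Dv n (f i)) :
    Dv n (∑ i ∈ t, f i) := by
  intro i j
  rw [Matrix.sum_apply]
  exact Finset.dvd_sum fun k hk => h k hk i j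

/-- binomial estimate: the key congruence for `p`-th powers -/
lemma pow_key {n : ℕ} (hn : 2 ≤ n) {g : GL} (hg : g ∈ K (r := r) n) :
    Dv (n + 2) (((g : Mat))^p - 1 - (p:ℤ_[p])^(n+1) • lead n g) := by
  have hA := lead_spec (mem_K_iff.mp hg)
  set A := lead n g with hAdef
  have hp2 : 2 ≤ p := (Fact.out : p.Prime).two_le
  set x : Mat := (p:ℤ_[p])^n • A with hx
  have hgm : (g : Mat) = x + 1 := by rw [← hA]; abel
  have hxdv : Dv n x := by
    intro i j
    exact ⟨A i j, by simp [hx, Matrix.smul_apply, smul_eq_mul]⟩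
  have hbin : ((g : Mat))^p = ∑ m ∈ Finset.range (p+1), x ^ m * 1 ^ (p - m) * (p.choose m : Mat) := by
    rw [hgm, Commute.add_pow (Commute.one_right x)]
  have hsplit : ((g : Mat))^p - 1 - (p:ℤ_[p])^(n+1) • A
      = ∑ m ∈ Finset.Ico 2 (p+1), (p.choose m) • x ^ m := by
    rw [hbin, Finset.range_eq_Ico, Finset.sum_eq_sum_Ico_succ_bot (by omega),
      Finset.sum_eq_sum_Ico_succ_bot (by omega)]
    have h0 : x ^ 0 * 1 ^ (p - 0) * (p.choose 0 : Mat) = 1 := by simp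
    have h1 : x ^ 1 * 1 ^ (p - 1) * (p.choose 1 : Mat) = (p:ℤ_[p])^(n+1) • A := by
      rw [pow_one, one_pow, mul_one, Nat.choose_one_right, ← nsmul_eq_mul' x p,
        (Nat.cast_smul_eq_nsmul ℤ_[p] p x).symm, hx, smul_smul, ← pow_succ']
    have h2 : ∀ m, x ^ m * 1 ^ (p - m) * (p.choose m : Mat) = (p.choose m) • x ^ m := by
      intro m
      rw [one_pow, mul_one, ← nsmul_eq_mul' (x ^ m) (p.choose m)]
    rw [h0, h1]
    rw [Finset.sum_congr rfl (fun m _ => h2 m)]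
    abel
  rw [hsplit]
  refine Dv.sum fun m hm => ?_
  simp only [Finset.mem_Ico] at hm
  intro i j
  have hxm : (p:ℤ_[p])^(n*m) ∣ (x ^ m) i j := hxdv.pow m i j
  have hentry : ((p.choose m) • x ^ m) i j = ((p.choose m : ℤ_[p])) * (x ^ m) i j := by
    simp [Matrix.smul_apply, nsmul_eq_mul]
  rw [hentry]
  rcases eq_or_lt_of_le (Nat.lt_succ_iff.mp hm.2) with hmp | hmp
  · -- m = p
    have : (n + 2) ≤ n * m := by
      subst hmp; nlinarith
    exact Dvd.dvd.mul_left (dvd_trans (pow_dvd_pow _ this) hxm) _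
  · -- m < p, so p ∣ choose
    have hdvd : (p:ℤ_[p]) ∣ (p.choose m : ℤ_[p]) := by
      obtain ⟨c, hc⟩ := (Fact.out : p.Prime).dvd_choose_self (by omega) hmp
      exact ⟨c, by exact_mod_cast congrArg (Nat.cast : ℕ → ℤ_[p]) hc⟩
    have h1 : (n + 1) ≤ n * m := by nlinarith
    have : (p:ℤ_[p])^(n+2) ∣ (p:ℤ_[p]) * (p:ℤ_[p])^(n+1) := by
      rw [← pow_succ']
    refine dvd_trans this (mul_dvd_mul hdvd (dvd_trans (pow_dvd_pow _ h1) hxm))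

lemma pow_mem_K {n : ℕ} (hn : 2 ≤ n) {g : GL} (hg : g ∈ K (r := r) n) :
    g ^ p ∈ K (r := r) (n + 1) := by
  have hk := pow_key hn hg
  have hA := lead_spec (mem_K_iff.mp hg)
  intro i j
  have : ((g ^ p : GL) : Mat) - 1
      = (((g : Mat))^p - 1 - (p:ℤ_[p])^(n+1) • lead n g) + (p:ℤ_[p])^(n+1) • lead n g := by
    rw [Units.val_pow_eq_pow_val]; abel
  rw [this]
  refine (Dv.add (hk.mono (by omega)) ?_) i j
  intro i' j'
  exact ⟨lead n g i' j', by simp [Matrix.smul_apply, smul_eq_mul]⟩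

lemma theta_pow {n : ℕ} (hn : 2 ≤ n) {g : GL} (hg : g ∈ K (r := r) n) :
    theta (n+1) (g ^ p) = theta n g := by
  have hk := pow_key hn hg
  set A := lead n g with hAdef
  set R : Mat := ((g : Mat))^p - 1 - (p:ℤ_[p])^(n+1) • A with hR
  set C : Mat := Matrix.of fun i j => pdiv (n+2) (R i j) with hC
  have hRC : R = (p:ℤ_[p])^(n+2) • C := by
    ext i j
    simp only [Matrix.smul_apply, hC, Matrix.of_apply, smul_eq_mul]
    exact (pdiv_spec (hk i j)).symm
  have key : ((g ^ p : GL) : Mat) - 1 = (p:ℤ_[p])^(n+1) • (A + (p:ℤ_[p]) • C) := by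
    rw [Units.val_pow_eq_pow_val]
    have : ((g : Mat))^p - 1 = R + (p:ℤ_[p])^(n+1) • A := by rw [hR]; abel
    rw [this, hRC]
    module
  rw [theta_eq_of key, theta_eq_map_lead]
  ext i j
  simp only [Matrix.map_apply, Matrix.add_apply, Matrix.smul_apply, smul_eq_mul, map_add, map_mul]
  have hp0 : (PadicInt.toZMod ((p : ℤ_[p]))) = 0 := by
    rw [← RingHom.mem_ker, PadicInt.ker_toZMod, PadicInt.maximalIdeal_eq_span_p,
      Ideal.mem_span_singleton]
  rw [hp0, zero_mul, add_zero]

/-- image of `H ∩ K n` under `theta n` -/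
def V (H : Subgroup GL) (n : ℕ) : Set (Matrix (Fin r) (Fin r) (ZMod p)) :=
  theta n '' {g : GL | g ∈ H ⊓ K (p := p) (r := r) n}

lemma V_subset_succ (H : Subgroup GL) {n : ℕ} (hn : 2 ≤ n) : V H n ⊆ V H (n+1) := by
  rintro α ⟨g, hg, rfl⟩
  simp only [Set.mem_setOf_eq, Subgroup.mem_inf] at hg
  refine ⟨g ^ p, ?_, theta_pow hn hg.2⟩
  rw [Set.mem_setOf_eq, Subgroup.mem_inf]
  exact ⟨pow_mem hg.1 p, pow_mem_K hn hg.2⟩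

lemma V_subset_of_le (H : Subgroup GL) {a b : ℕ} (ha : 2 ≤ a) (hab : a ≤ b) : V H a ⊆ V H b := by
  induction b, hab using Nat.le_induction with
  | base => exact subset_rfl
  | succ n hn ih => exact ih.trans (V_subset_succ H (le_trans ha hn))

lemma exists_stable (H : Subgroup GL) : ∃ N, 2 ≤ N ∧ ∀ n, N ≤ n → V H n = V H N := by
  classical
  set g : ℕ → ℕ := fun n => (V H (n+2)).ncard with hg
  have hbdd : ∀ n, g n ≤ Nat.card (Matrix (Fin r) (Fin r) (ZMod p)) := by
    intro n
    have := Set.ncard_le_ncard (Set.subset_univ (V H (n+2))) (Set.toFinite _)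
    simpa [Set.ncard_univ] using this
  have hne : (Set.range g).Nonempty := ⟨g 0, ⟨0, rfl⟩⟩
  have hbd : BddAbove (Set.range g) := ⟨_, by rintro _ ⟨n, rfl⟩; exact hbdd n⟩
  obtain ⟨N₀, hN₀⟩ := Nat.sSup_mem hne hbd
  refine ⟨N₀ + 2, by omega, ?_⟩
  intro n hn
  obtain ⟨m, rfl⟩ : ∃ m, n = m + 2 := ⟨n - 2, by omega⟩
  have hsub : V H (N₀+2) ⊆ V H (m+2) := V_subset_of_le H (by omega) hn
  have h1 : (V H (m+2)).ncard ≤ g N₀ := by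
    rw [hN₀]
    exact le_csSup hbd ⟨m, rfl⟩
  exact (Set.eq_of_subset_of_ncard_le hsub h1 (Set.toFinite _)).symm

lemma norm_le_of_dvd {m : ℕ} {y : ℤ_[p]} (h : (p:ℤ_[p])^m ∣ y) : ‖y‖ ≤ ((p:ℝ)⁻¹)^m := by
  obtain ⟨c, rfl⟩ := h
  calc ‖(p:ℤ_[p])^m * c‖ ≤ ‖(p:ℤ_[p])^m‖ * ‖c‖ := norm_mul_le _ _
    _ ≤ ‖(p:ℤ_[p])^m‖ * 1 := by
        exact mul_le_mul_of_nonneg_left (PadicInt.norm_le_one c) (norm_nonneg _)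
    _ ≤ ((p:ℝ)⁻¹)^m := by
        rw [mul_one]
        calc ‖(p:ℤ_[p])^m‖ ≤ ‖(p:ℤ_[p])‖^m := norm_pow_le _ _
          _ = ((p:ℝ)⁻¹)^m := by rw [PadicInt.norm_p]

lemma entry_norm_mul_le {m : ℕ} {b : Mat} (hb : Dv m b) (a : Mat) (i j : Fin r) :
    ‖(a * b) i j‖ ≤ r * ((p:ℝ)⁻¹)^m := by
  rw [Matrix.mul_apply]
  calc ‖∑ k, a i k * b k j‖ ≤ ∑ k, ‖a i k * b k j‖ := norm_sum_le _ _
    _ ≤ ∑ _k : Fin r, ((p:ℝ)⁻¹)^m := by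
        refine Finset.sum_le_sum fun k _ => ?_
        calc ‖a i k * b k j‖ ≤ ‖a i k‖ * ‖b k j‖ := norm_mul_le _ _
          _ ≤ 1 * (((p:ℝ)⁻¹)^m) :=
              mul_le_mul (PadicInt.norm_le_one _) (norm_le_of_dvd (hb k j)) (norm_nonneg _)
                zero_le_one
          _ = ((p:ℝ)⁻¹)^m := one_mul _
    _ = r * ((p:ℝ)⁻¹)^m := by simp [Finset.sum_const, nsmul_eq_mul]

lemma entry_norm_mul_le' {m : ℕ} {b : Mat} (hb : Dv m b) (a : Mat) (i j : Fin r) :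
    ‖(b * a) i j‖ ≤ r * ((p:ℝ)⁻¹)^m := by
  rw [Matrix.mul_apply]
  calc ‖∑ k, b i k * a k j‖ ≤ ∑ k, ‖b i k * a k j‖ := norm_sum_le _ _
    _ ≤ ∑ _k : Fin r, ((p:ℝ)⁻¹)^m := by
        refine Finset.sum_le_sum fun k _ => ?_
        calc ‖b i k * a k j‖ ≤ ‖b i k‖ * ‖a k j‖ := norm_mul_le _ _
          _ ≤ (((p:ℝ)⁻¹)^m) * 1 :=
              mul_le_mul (norm_le_of_dvd (hb i k)) (PadicInt.norm_le_one _)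
                (norm_nonneg _) (by positivity)
          _ = ((p:ℝ)⁻¹)^m := mul_one _
    _ = r * ((p:ℝ)⁻¹)^m := by simp [Finset.sum_const, nsmul_eq_mul]

lemma tendsto_bound : Filter.Tendsto (fun m : ℕ => (r : ℝ) * ((p:ℝ)⁻¹)^m)
    Filter.atTop (nhds 0) := by
  have hp1 : (1:ℝ) < (p:ℕ) := by
    exact_mod_cast (Fact.out : p.Prime).one_lt
  have h0 : (0:ℝ) ≤ (p:ℝ)⁻¹ := by positivity
  have h1 : (p:ℝ)⁻¹ < 1 := inv_lt_one_of_one_lt₀ hp1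
  simpa using (tendsto_pow_atTop_nhds_zero_of_lt_one h0 h1).const_mul (r:ℝ)

lemma tendsto_of_mem_K (x : GL) (u : ℕ → GL) (hu : ∀ m, (u m)⁻¹ * x ∈ K (p := p) (r := r) m) :
    Filter.Tendsto u Filter.atTop (nhds x) := by
  have key : ∀ (v : ℕ → GL) (y : GL), (∀ m, Dv (p := p) (r := r) m ((y : Mat) - (v m : Mat))) →
      Filter.Tendsto (fun m => ((v m : GL) : Mat)) Filter.atTop (nhds (y : Mat)) := by
    intro v y hv
    refine tendsto_pi_nhds.mpr ?_
    intro i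
    refine tendsto_pi_nhds.mpr ?_
    intro j
    rw [tendsto_iff_norm_sub_tendsto_zero]
    refine squeeze_zero_norm (fun m => ?_) (tendsto_bound (p := p) (r := r))
    have h1 : ((v m : GL) : Mat) i j - (y : Mat) i j = -(((((y : Mat) - (v m : Mat)) * 1 : Mat)) i j) := by
      simp [Matrix.sub_apply]
    rw [norm_norm, h1, norm_neg]
    exact entry_norm_mul_le' (hv m) 1 i j
  have hval : Filter.Tendsto (fun m => ((u m : GL) : Mat)) Filter.atTop (nhds (x : Mat)) := by
    refine key u x fun m => ?_
    have hk := hu m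
    have hx : (x : Mat) = (u m : Mat) * (((u m)⁻¹ * x : GL) : Mat) := by
      have : (u m) * ((u m)⁻¹ * x) = x := by group
      exact_mod_cast (congrArg Units.val this).symm
    have hdiff : (x : Mat) - (u m : Mat) = (u m : Mat) * ((((u m)⁻¹ * x : GL) : Mat) - 1) := by
      nth_rewrite 1 [hx]
      noncomm_ring
    rw [hdiff]
    exact (Dv.mul_left hk _)
  have hinv : Filter.Tendsto (fun m => (((u m)⁻¹ : GL) : Mat)) Filter.atTop
      (nhds ((x⁻¹ : GL) : Mat)) := by
    refine key _ _ fun m => ?_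
    have hk : ((u m)⁻¹ * x)⁻¹ ∈ K (p := p) (r := r) m := (K m).inv_mem (hu m)
    have hx : ((x⁻¹ : GL) : Mat) = ((((u m)⁻¹ * x)⁻¹ : GL) : Mat) * (((u m)⁻¹ : GL) : Mat) := by
      have : x⁻¹ = ((u m)⁻¹ * x)⁻¹ * (u m)⁻¹ := by group
      exact_mod_cast (congrArg Units.val this)
    have hdiff : ((x⁻¹ : GL) : Mat) - (((u m)⁻¹ : GL) : Mat)
        = (((((u m)⁻¹ * x)⁻¹ : GL) : Mat) - 1) * (((u m)⁻¹ : GL) : Mat) := by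
      nth_rewrite 1 [hx]
      noncomm_ring
    rw [hdiff]
    exact (Dv.mul_right hk _)
  rw [Units.isEmbedding_embedProduct.tendsto_nhds_iff]
  exact hval.prodMk_nhds ((MulOpposite.continuous_op.tendsto _).comp hinv)
/-- choice of a preimage under `theta N` -/
noncomputable def sfun (H : Subgroup GL) (N : ℕ) (α : Matrix (Fin r) (Fin r) (ZMod p)) : GL :=
  if h : α ∈ V H N then h.choose else 1

lemma sfun_mem_H (H : Subgroup GL) (N : ℕ) (α : Matrix (Fin r) (Fin r) (ZMod p)) :
    sfun H N α ∈ H := by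
  rw [sfun]
  split_ifs with h
  · exact (Subgroup.mem_inf.mp h.choose_spec.1).1
  · exact one_mem H

lemma sfun_spec (H : Subgroup GL) (N : ℕ) {α : Matrix (Fin r) (Fin r) (ZMod p)}
    (h : α ∈ V H N) :
    sfun H N α ∈ H ⊓ K (p := p) (r := r) N ∧ theta N (sfun H N α) = α := by
  rw [sfun, dif_pos h]
  exact ⟨h.choose_spec.1, h.choose_spec.2⟩

/-- reduction mod `p^N` on `GL` -/
noncomputable def pihom (N : ℕ) : GL →* (Matrix (Fin r) (Fin r) (ZMod (p^N)))ˣ :=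
  Units.map ((PadicInt.toZModPow N).mapMatrix.toMonoidHom)

lemma mem_K_of_pihom_eq {N : ℕ} {c g : GL} (h : pihom (p := p) (r := r) N c = pihom N g) :
    c⁻¹ * g ∈ K (p := p) (r := r) N := by
  have hval : ((c : Mat)).map (PadicInt.toZModPow N) = ((g : Mat)).map (PadicInt.toZModPow N) := by
    have := congrArg Units.val h
    simpa [pihom, Units.coe_map, RingHom.mapMatrix_apply] using this
  have hdv : Dv (p := p) (r := r) N ((g : Mat) - (c : Mat)) := by
    intro i j
    have hij : PadicInt.toZModPow N ((c : Mat) i j) = PadicInt.toZModPow N ((g : Mat) i j) := by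
      have := congrFun (congrFun hval i) j
      simpa [Matrix.map_apply] using this
    have : PadicInt.toZModPow N (((g : Mat) - (c : Mat)) i j) = 0 := by
      simp [Matrix.sub_apply, map_sub, hij]
    rw [← RingHom.mem_ker, PadicInt.ker_toZModPow, Ideal.mem_span_singleton] at this
    simpa using this
  have key : ((c⁻¹ * g : GL) : Mat) - 1 = ((c⁻¹ : GL) : Mat) * ((g : Mat) - (c : Mat)) := by
    have h1 : ((c⁻¹ * g : GL) : Mat) = ((c⁻¹ : GL) : Mat) * (g : Mat) := rfl
    have h2 : ((c⁻¹ : GL) : Mat) * (c : Mat) = 1 := c.inv_mul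
    rw [h1, mul_sub, h2]
  rw [mem_K_iff, key]
  exact hdv.mul_left _

/-- choice of coset representatives -/
noncomputable def tfun (H : Subgroup GL) (N : ℕ)
    (β : (Matrix (Fin r) (Fin r) (ZMod (p^N)))ˣ) : GL :=
  if h : β ∈ (pihom (p := p) (r := r) N) '' (H : Set GL) then h.choose else 1

lemma tfun_mem_H (H : Subgroup GL) (N : ℕ) (β : (Matrix (Fin r) (Fin r) (ZMod (p^N)))ˣ) :
    tfun H N β ∈ H := by
  rw [tfun]
  split_ifs with h
  · exact h.choose_spec.1
  · exact one_mem H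

lemma tfun_spec (H : Subgroup GL) (N : ℕ) {β : (Matrix (Fin r) (Fin r) (ZMod (p^N)))ˣ}
    (h : β ∈ (pihom (p := p) (r := r) N) '' (H : Set GL)) :
    pihom (p := p) (r := r) N (tfun H N β) = β := by
  rw [tfun, dif_pos h]
  exact h.choose_spec.2

theorem main (H : Subgroup GL) : ∃ S : Finset GL, (S : Set GL) ⊆ (H : Set GL) ∧
    (H : Set GL) ⊆ closure ((Subgroup.closure (S : Set GL)) : Set GL) := by
  classical
  obtain ⟨N, hN2, hstab⟩ := exists_stable H
  haveI : NeZero p := ⟨(Fact.out : p.Prime).ne_zero⟩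
  haveI : NeZero (p ^ N) := ⟨pow_ne_zero _ (Fact.out : p.Prime).ne_zero⟩
  have hfin : (Set.range (sfun H N) ∪ Set.range (tfun H N)).Finite :=
    (Set.finite_range _).union (Set.finite_range _)
  set S : Finset GL := hfin.toFinset with hS
  have hScoe : (S : Set GL) = Set.range (sfun H N) ∪ Set.range (tfun H N) :=
    Set.Finite.coe_toFinset hfin
  have hSH : (S : Set GL) ⊆ (H : Set GL) := by
    intro g hg
    rw [hScoe] at hg
    rcases hg with ⟨α, rfl⟩ | ⟨β, rfl⟩
    · exact sfun_mem_H H N α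
    · exact tfun_mem_H H N β
  refine ⟨S, hSH, ?_⟩
  set W : Subgroup GL := Subgroup.closure (S : Set GL) with hW
  have hs1W : ∀ α, sfun H N α ∈ W := by
    intro α
    apply Subgroup.subset_closure
    rw [hScoe]
    exact Or.inl ⟨α, rfl⟩
  have htW : ∀ β, tfun H N β ∈ W := by
    intro β
    apply Subgroup.subset_closure
    rw [hScoe]
    exact Or.inr ⟨β, rfl⟩
  -- the key induction
  have claim1 : ∀ n, N ≤ n → ∀ h : GL, h ∈ H ⊓ K (p := p) (r := r) n →
      ∃ c : GL, c ∈ W ∧ c ∈ H ⊓ K (p := p) (r := r) n ∧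
        c⁻¹ * h ∈ H ⊓ K (p := p) (r := r) (n+1) := by
    intro n hn
    induction n, hn using Nat.le_induction with
    | base =>
        intro h hh
        have hα : theta N h ∈ V H N := ⟨h, hh, rfl⟩
        obtain ⟨hc, hθ⟩ := sfun_spec H N hα
        refine ⟨sfun H N (theta N h), hs1W _, hc, ?_⟩
        rw [Subgroup.mem_inf] at hh hc ⊢
        constructor
        · exact mul_mem (inv_mem hc.1) hh.1
        · refine (theta_eq_zero_iff (mul_mem (inv_mem hc.2) hh.2)).mp ?_
          rw [theta_mul (by omega) (inv_mem hc.2) hh.2, theta_inv (by omega) hc.2, hθ]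
          abel
    | succ n hn ih =>
        intro h hh
        have hθh : theta (n+1) h ∈ V H n := by
          have h1 : theta (n+1) h ∈ V H (n+1) := ⟨h, hh, rfl⟩
          rw [hstab (n+1) (by omega), ← hstab n hn] at h1
          exact h1
        obtain ⟨x, hx, hθx⟩ := hθh
        obtain ⟨c, hcW, hc, hv⟩ := ih x hx
        rw [Subgroup.mem_inf] at hh hc hv
        have hn2 : 2 ≤ n := le_trans hN2 hn
        have hcp : c ^ p ∈ K (p := p) (r := r) (n+1) := pow_mem_K hn2 hc.2
        refine ⟨c ^ p, pow_mem hcW p, Subgroup.mem_inf.mpr ⟨pow_mem hc.1 p, hcp⟩, ?_⟩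
        rw [Subgroup.mem_inf]
        constructor
        · exact mul_mem (inv_mem (pow_mem hc.1 p)) hh.1
        · refine (theta_eq_zero_iff (mul_mem (inv_mem hcp) hh.2)).mp ?_
          rw [theta_mul (by omega) (inv_mem hcp) hh.2, theta_inv (by omega) hcp,
            theta_pow hn2 hc.2]
          have hx' : x = c * (c⁻¹ * x) := by group
          have hθv : theta n (c⁻¹ * x) = 0 :=
            (theta_eq_zero_iff ((K (p := p) (r := r) n).mul_mem (inv_mem hc.2)
              ((hx.out.2).mono (by omega)))).mpr hv.2
          have : theta (n+1) h = theta n c := by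
            rw [← hθx, hx', theta_mul (by omega) hc.2
              ((K (p := p) (r := r) n).mul_mem (inv_mem hc.2) ((hx.out.2).mono (by omega))), hθv,
              add_zero]
          rw [this]
          abel
  have claim2 : ∀ m : ℕ, ∀ h : GL, h ∈ H ⊓ K (p := p) (r := r) N →
      ∃ c : GL, c ∈ W ∧ c⁻¹ * h ∈ H ⊓ K (p := p) (r := r) (N + m) := by
    intro m
    induction m with
    | zero =>
        intro h hh
        refine ⟨1, one_mem W, ?_⟩
        rw [inv_one, one_mul, Nat.add_zero]
        exact hh
    | succ m ih =>
        intro h hh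
        obtain ⟨c, hcW, hch⟩ := ih h hh
        obtain ⟨c', hc'W, _, hc'⟩ := claim1 (N + m) (by omega) _ hch
        refine ⟨c * c', mul_mem hcW hc'W, ?_⟩
        have : (c * c')⁻¹ * h = c'⁻¹ * (c⁻¹ * h) := by group
        rw [this]
        exact hc'
  have claim3 : ∀ h : GL, h ∈ H ⊓ K (p := p) (r := r) N →
      h ∈ closure (W : Set GL) := by
    intro h hh
    choose c hcW hc using fun m => claim2 m h hh
    refine mem_closure_of_tendsto (tendsto_of_mem_K h c ?_) (Filter.Eventually.of_forall hcW)
    intro m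
    exact ((Subgroup.mem_inf.mp (hc m)).2).mono (by omega)
  -- assembly
  intro h hh
  set t : GL := tfun H N (pihom (p := p) (r := r) N h) with ht
  have hβ : pihom (p := p) (r := r) N h ∈ (pihom (p := p) (r := r) N) '' (H : Set GL) :=
    ⟨h, hh, rfl⟩
  have hπt : pihom (p := p) (r := r) N t = pihom (p := p) (r := r) N h := tfun_spec H N hβ
  have hy : t⁻¹ * h ∈ H ⊓ K (p := p) (r := r) N := by
    rw [Subgroup.mem_inf]
    exact ⟨mul_mem (inv_mem (tfun_mem_H H N _)) hh, mem_K_of_pihom_eq hπt⟩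
  have hyc : t⁻¹ * h ∈ closure (W : Set GL) := claim3 _ hy
  have hWc : closure (W : Set GL) = (W.topologicalClosure : Set GL) := rfl
  have h1 : t ∈ W.topologicalClosure := W.le_topologicalClosure (htW _)
  have h2 : t⁻¹ * h ∈ W.topologicalClosure := by rw [← SetLike.mem_coe, ← hWc]; exact hyc
  have h3 : h ∈ W.topologicalClosure := by
    have : h = t * (t⁻¹ * h) := by group
    rw [this]
    exact mul_mem h1 h2
  rw [hWc]
  exact h3

end Stmt12Aux

/-- Every closed subgroup `H` of `GL_r(ℤ_p)` is topologically finitely generated: there is a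
finite subset of `H` whose generated subgroup is dense in `H` (i.e. `H` is contained in the
closure of the subgroup it generates). -/
theorem stmt_12 (p : ℕ) [Fact p.Prime] (r : ℕ)
    (H : Subgroup (Matrix.GeneralLinearGroup (Fin r) ℤ_[p]))
    (hH : IsClosed (H : Set (Matrix.GeneralLinearGroup (Fin r) ℤ_[p]))) :
    ∃ S : Finset (Matrix.GeneralLinearGroup (Fin r) ℤ_[p]),
      (S : Set (Matrix.GeneralLinearGroup (Fin r) ℤ_[p])) ⊆ (H : Set _) ∧
      (H : Set (Matrix.GeneralLinearGroup (Fin r) ℤ_[p])) ⊆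
        closure ((Subgroup.closure (S : Set (Matrix.GeneralLinearGroup (Fin r) ℤ_[p]))) :
          Set (Matrix.GeneralLinearGroup (Fin r) ℤ_[p])) := by
  exact Stmt12Aux.main H
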